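/- If φ : X → ℂ is k-homogeneous on the l¹-sum X of finite dimensional Banach spaces (X_n, ‖·‖_n), i.e., φ is a continuous polynomial with φ(λx) = λ^k φ(x) for all x ∈ X and λ ∈ l^∞, then for all x ∈ X, |φ(x)| ≤ [φ] · |x|^k · ‖k‖^{‖k‖} / k^k, where [φ] = sup_{‖x‖≤1} |φ(x)| and |x|^k = ∏_n ‖x_n‖_n^{k_n}. -/

import Mathlib

open scoped BigOperators ENNReal

/-- If `φ` is `k`-homogeneous on the `l¹`-sum `X` of finite dimensional Banach
spaces, then `|φ(x)| ≤ [φ] · |x|^k · ‖k‖^‖k‖ / k^k` for all `x ∈ X`, where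
`[φ] = sup_{‖x‖ ≤ 1} |φ(x)|` and `|x|^k = ∏ ‖x_n‖^{k_n}`. -/
theorem khomog_bound (E : ℕ → Type) [∀ n, NormedAddCommGroup (E n)]
    [∀ n, NormedSpace ℂ (E n)] [∀ n, FiniteDimensional ℂ (E n)]
    (k : ℕ →₀ ℕ) (φ : lp E 1 → ℂ)
    (hφdiff : Differentiable ℂ φ)
    (hφhom : ∀ (x y : lp E 1) (lam : ℕ → ℂ),
      (∀ n, y n = lam n • x n) →
      φ y = (∏ n ∈ k.support, lam n ^ k n) * φ x)
    (x : lp E 1) :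
    ‖φ x‖ ≤
      sSup {r : ℝ | ∃ y : lp E 1, ‖y‖ ≤ 1 ∧ r = ‖φ y‖} *
        (∏ n ∈ k.support, ‖x n‖ ^ k n) *
        (((k.sum fun _ v => v : ℕ) : ℝ) ^ (k.sum fun _ v => v : ℕ) /
          ∏ n ∈ k.support, (k n : ℝ) ^ k n) := by
  classical
  set S := {r : ℝ | ∃ y : lp E 1, ‖y‖ ≤ 1 ∧ r = ‖φ y‖} with hS
  set d : ℕ := k.sum fun _ v => v with hd
  have hd_eq : d = ∑ n ∈ k.support, k n := rfl
  -- scalar homogeneity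
  have hscal : ∀ (c : ℂ) (y : lp E 1), φ (c • y) = c ^ d * φ y := by
    intro c y
    rw [hφhom y (c • y) (fun _ => c) (fun n => by rw [lp.coeFn_smul]; rfl),
      Finset.prod_pow_eq_pow_sum, hd_eq]
  -- boundedness on the unit ball
  have hcont : ContinuousAt φ 0 := hφdiff.continuous.continuousAt
  obtain ⟨δ, hδpos, hball⟩ := Metric.continuousAt_iff.mp hcont 1 one_pos
  set t : ℝ := δ / 2 with ht
  have htpos : 0 < t := by positivity
  have hbdd : BddAbove S := by
    refine ⟨(‖φ 0‖ + 1) / t ^ d, ?_⟩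
    rintro r ⟨y, hy, rfl⟩
    have h1 : dist ((t : ℂ) • y) 0 < δ := by
      rw [dist_zero_right, norm_smul]
      have : ‖(t : ℂ)‖ = t := by
        rw [Complex.norm_real, Real.norm_of_nonneg htpos.le]
      rw [this]
      calc t * ‖y‖ ≤ t * 1 := by nlinarith
        _ < δ := by simp [ht]; linarith
    have h2 := hball h1
    rw [dist_eq_norm] at h2
    have h3 : ‖φ ((t : ℂ) • y)‖ ≤ ‖φ 0‖ + 1 := by
      have := norm_sub_norm_le (φ ((t : ℂ) • y)) (φ 0)
      linarith
    rw [hscal] at h3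
    rw [norm_mul, norm_pow] at h3
    have h4 : ‖(t : ℂ)‖ = t := by
      rw [Complex.norm_real, Real.norm_of_nonneg htpos.le]
    rw [h4] at h3
    rw [le_div_iff₀ (by positivity)]
    linarith [mul_comm (t ^ d) ‖φ y‖ ▸ h3]
  have hSne : S.Nonempty := ⟨‖φ 0‖, 0, by simp, rfl⟩
  set M := sSup S with hM
  have hMle : ∀ y : lp E 1, ‖y‖ ≤ 1 → ‖φ y‖ ≤ M :=
    fun y hy => le_csSup hbdd ⟨y, hy, rfl⟩
  have hM0 : 0 ≤ M := le_trans (norm_nonneg _) (hMle 0 (by simp))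
  -- case d = 0
  rcases Nat.eq_zero_or_pos d with hd0 | hdpos
  · have hsupp : k.support = ∅ := by
      by_contra h
      obtain ⟨n, hn⟩ := Finset.nonempty_iff_ne_empty.mpr h
      have : k n ≠ 0 := Finsupp.mem_support_iff.mp hn
      have : 0 < ∑ m ∈ k.support, k m :=
        Finset.sum_pos' (fun _ _ => Nat.zero_le _) ⟨n, hn, Nat.pos_of_ne_zero this⟩
      omega
    have hφx : φ x = φ 0 := by
      have := hφhom x 0 (fun _ => 0) (fun n => by simp)
      rw [hsupp] at this
      simpa using this.symm
    rw [hφx, hd0, hsupp]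
    simpa using hMle 0 (by simp)
  -- case d > 0
  by_cases hx0 : ∃ n ∈ k.support, x n = 0
  · -- φ x = 0
    obtain ⟨n, hn, hxn⟩ := hx0
    have hφx : φ x = 0 := by
      have := hφhom x x (fun m => if x m = 0 then 0 else 1)
        (fun m => by by_cases h : x m = 0 <;> simp [h])
      have hz : (∏ m ∈ k.support, (if x m = 0 then (0:ℂ) else 1) ^ k m) = 0 := by
        refine Finset.prod_eq_zero hn ?_
        simp [hxn, pow_eq_zero_iff (Finsupp.mem_support_iff.mp hn)]
      rw [hz, zero_mul] at this
      exact this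
    rw [hφx, norm_zero]
    have h1 : (0:ℝ) ≤ ∏ n ∈ k.support, ‖x n‖ ^ k n :=
      Finset.prod_nonneg fun _ _ => by positivity
    have h2 : (0:ℝ) ≤ ∏ n ∈ k.support, (k n : ℝ) ^ k n :=
      Finset.prod_nonneg fun _ _ => by positivity
    have h3 : (0:ℝ) ≤ (d:ℝ) ^ d := by positivity
    exact mul_nonneg (mul_nonneg hM0 h1) (div_nonneg h3 h2)
  push_neg at hx0
  -- the main case
  set lam : ℕ → ℂ := fun n =>
    if n ∈ k.support then (((k n : ℝ) / (d * ‖x n‖) : ℝ) : ℂ) else 0 with hlam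
  have hyz : ∀ n ∉ k.support, lam n • x n = 0 := fun n hn => by
    simp only [hlam, if_neg hn, zero_smul]
  have hmem : Memℓp (fun n => lam n • x n) 1 := by
    apply memℓp_gen
    apply summable_of_ne_finset_zero (s := k.support)
    intro n hn
    simp [hyz n hn]
  set y : lp E 1 := ⟨fun n => lam n • x n, hmem⟩ with hy
  have hycoe : ∀ n, y n = lam n • x n := fun n => rfl
  have hlam_abs : ∀ n ∈ k.support, ‖lam n‖ = (k n : ℝ) / (d * ‖x n‖) := by
    intro n hn
    have hk : 0 < k n := Nat.pos_of_ne_zero (Finsupp.mem_support_iff.mp hn)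
    have hx : 0 < ‖x n‖ := norm_pos_iff.mpr (hx0 n hn)
    rw [hlam]
    simp only [hn, if_pos]
    rw [Complex.norm_real, Real.norm_eq_abs, abs_of_pos (by positivity)]
  have hynorm : ‖y‖ ≤ 1 := by
    rw [lp.norm_eq_tsum_rpow (by norm_num) y]
    have h1 : (1 : ℝ≥0∞).toReal = 1 := by simp
    rw [h1]
    simp only [Real.rpow_one, one_div_one]
    rw [tsum_eq_sum (s := k.support) (fun n hn => by
      exact (congrArg norm (hycoe n)).trans (by rw [hyz n hn, norm_zero]))]
    have : ∀ n ∈ k.support, ‖y n‖ = (k n : ℝ) / d := by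
      intro n hn
      have hx : 0 < ‖x n‖ := norm_pos_iff.mpr (hx0 n hn)
      rw [hycoe n, norm_smul, hlam_abs n hn]
      field_simp
    rw [Finset.sum_congr rfl this]
    rw [← Finset.sum_div, ← Nat.cast_sum, ← hd_eq]
    rw [div_self (by positivity : (d:ℝ) ≠ 0)]
  have hval : φ y = (∏ n ∈ k.support, lam n ^ k n) * φ x :=
    hφhom x y lam (fun n => rfl)
  set P : ℝ := ∏ n ∈ k.support, ‖lam n‖ ^ k n with hP
  have hPpos : 0 < P := by
    apply Finset.prod_pos
    intro n hn
    have hk : 0 < k n := Nat.pos_of_ne_zero (Finsupp.mem_support_iff.mp hn)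
    have hx : 0 < ‖x n‖ := norm_pos_iff.mpr (hx0 n hn)
    rw [hlam_abs n hn]
    positivity
  have hprodx : 0 < ∏ n ∈ k.support, ‖x n‖ ^ k n :=
    Finset.prod_pos fun n hn => by
      have := norm_pos_iff.mpr (hx0 n hn); positivity
  have hprodk : 0 < ∏ n ∈ k.support, (k n : ℝ) ^ k n :=
    Finset.prod_pos fun n hn => by
      have : 0 < k n := Nat.pos_of_ne_zero (Finsupp.mem_support_iff.mp hn)
      positivity
  have hPval : P = (∏ n ∈ k.support, (k n : ℝ) ^ k n) /
      ((d : ℝ) ^ d * ∏ n ∈ k.support, ‖x n‖ ^ k n) := by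
    rw [hP, Finset.prod_congr rfl (fun n hn => by rw [hlam_abs n hn])]
    rw [Finset.prod_congr rfl (fun n hn => div_pow _ _ _),
      Finset.prod_div_distrib]
    congr 1
    rw [Finset.prod_congr rfl (fun n hn => mul_pow (d:ℝ) ‖x n‖ (k n)),
      Finset.prod_mul_distrib, Finset.prod_pow_eq_pow_sum, ← hd_eq]
  have habs : ‖φ y‖ = P * ‖φ x‖ := by
    rw [hval, norm_mul, hP]
    congr 1
    rw [norm_prod]
    exact Finset.prod_congr rfl fun n _ => norm_pow _ _
  have key : ‖φ x‖ ≤ M / P := by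
    rw [le_div_iff₀ hPpos, mul_comm, ← habs]
    exact hMle y hynorm
  refine key.trans (le_of_eq ?_)
  rw [hPval, div_div_eq_mul_div]
  field_simp
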